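/- Let v̲ ≤ v̄ be real numbers and let W : ℝ → ℝ be differentiable on [v̲, v̄] with derivative W′ ≤ 0 on [v̲, v̄]; assume W′ and u ↦ u·W′(u) are interval-integrable on [v̲, v̄]. Define the payment P(v) = −∫_{v̲}^{v} u·W′(u) du for v ∈ [v̲, v̄]. Then for every true delay cost v⋆ ∈ [v̲, v̄] and every declared delay cost v ∈ [v̲, v̄], one has v⋆·W(v⋆) + P(v⋆) ≤ v⋆·W(v) + P(v); that is, declaring the true delay cost minimizes the generalized cost. -/
import Mathlib


/-- Incentive compatibility of the marginal-cost payment (continuous core of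
Theorem 1): if the expected waiting time `W` is differentiable with
nonincreasing derivative `W' ≤ 0` on `[v̲, v̄]` and the payment is
`P v = −∫_{v̲}^{v} u·W′(u) du`, then declaring the true delay cost `v⋆`
minimizes the generalized cost `v⋆·W(v) + P(v)`. -/
theorem marginal_cost_payment_incentive_compatible
    (vlb vub : ℝ) (hv : vlb ≤ vub) (W W' : ℝ → ℝ)
    (hderiv : ∀ u ∈ Set.Icc vlb vub, HasDerivAt W (W' u) u)
    (hneg : ∀ u ∈ Set.Icc vlb vub, W' u ≤ 0)
    (hint : IntervalIntegrable W' MeasureTheory.volume vlb vub)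
    (hint' : IntervalIntegrable (fun u => u * W' u) MeasureTheory.volume vlb vub) :
    ∀ vstar ∈ Set.Icc vlb vub, ∀ v ∈ Set.Icc vlb vub,
      vstar * W vstar + (-(∫ u in vlb..vstar, u * W' u)) ≤
        vstar * W v + (-(∫ u in vlb..v, u * W' u)) := by
  intro vs hvs v hvmem
  have hIcc : Set.Icc vlb vub = Set.uIcc vlb vub := (Set.uIcc_of_le hv).symm
  -- subset facts
  have hsub : Set.uIcc vs v ⊆ Set.Icc vlb vub := by
    rw [hIcc]; exact Set.uIcc_subset_uIcc (hIcc ▸ hvs) (hIcc ▸ hvmem)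
  have hsub1 : Set.uIcc vlb vs ⊆ Set.uIcc vlb vub :=
    Set.uIcc_subset_uIcc Set.left_mem_uIcc (hIcc ▸ hvs)
  have hsub2 : Set.uIcc vlb v ⊆ Set.uIcc vlb vub :=
    Set.uIcc_subset_uIcc Set.left_mem_uIcc (hIcc ▸ hvmem)
  -- integrability on subintervals
  have hW'int : IntervalIntegrable W' MeasureTheory.volume vs v :=
    hint.mono_set (hIcc ▸ hsub)
  have huW'int : IntervalIntegrable (fun u => u * W' u) MeasureTheory.volume vs v :=
    hint'.mono_set (hIcc ▸ hsub)
  have h1 : IntervalIntegrable (fun u => u * W' u) MeasureTheory.volume vlb vs :=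
    hint'.mono_set hsub1
  have h2 : IntervalIntegrable (fun u => u * W' u) MeasureTheory.volume vlb v :=
    hint'.mono_set hsub2
  -- FTC
  have hFTC : ∫ u in vs..v, W' u = W v - W vs :=
    intervalIntegral.integral_eq_sub_of_hasDerivAt
      (fun u hu => hderiv u (hsub hu)) hW'int
  -- key nonnegativity
  have hkey : 0 ≤ ∫ u in vs..v, (vs - u) * W' u := by
    rcases le_total vs v with h | h
    · apply intervalIntegral.integral_nonneg h
      intro u hu
      have h1 : vs - u ≤ 0 := by linarith [hu.1]
      have h2 := hneg u (hsub (by rw [Set.uIcc_of_le h]; exact hu))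
      nlinarith
    · have h0 : 0 ≤ ∫ u in v..vs, (u - vs) * W' u := by
        apply intervalIntegral.integral_nonneg h
        intro u hu
        have h1 : u - vs ≤ 0 := by linarith [hu.2]
        have h2 := hneg u (hsub (by
          rw [Set.uIcc_comm, Set.uIcc_of_le h]; exact hu))
        nlinarith
      have heq : ∫ u in vs..v, (vs - u) * W' u
          = ∫ u in v..vs, (u - vs) * W' u := by
        rw [intervalIntegral.integral_symm v vs, ← intervalIntegral.integral_neg]
        congr 1; ext u; ring
      rw [heq]; exact h0
  -- expand the key integral
  have hexp : ∫ u in vs..v, (vs - u) * W' u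
      = vs * (∫ u in vs..v, W' u) - ∫ u in vs..v, u * W' u := by
    have := intervalIntegral.integral_sub (hW'int.const_mul vs) huW'int
    simpa [sub_mul, intervalIntegral.integral_const_mul] using this
  -- split payment integral
  have hadj : (∫ u in vlb..vs, u * W' u) + (∫ u in vs..v, u * W' u)
      = ∫ u in vlb..v, u * W' u :=
    intervalIntegral.integral_add_adjacent_intervals h1 huW'int
  rw [hFTC] at hexp
  nlinarith [hkey, hexp, hadj]
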